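/- Let A be a unital C*-algebra, let φ₁, φ₂, φ₃, φ₄ be positive linear functionals on A with φ_j(1) ≤ 1 for each j, and set φ := φ₁ − φ₂ + i(φ₃ − φ₄) and ψ := φ₁ + φ₂ + φ₃ + φ₄. Let p ∈ A be a projection and a ∈ A with 0 ≤ a ≤ 1. Then for every x ∈ A with ‖x‖ ≤ 1, |φ(p a x a p)| ≤ 4·(ψ((p a p)²))^{1/2}. -/

import Mathlib

open ComplexOrder ComplexStarModule

section aux
variable {A : Type*} [CStarAlgebra A] [PartialOrder A] [StarOrderedRing A]

lemma posfun_real (f : A →ₗ[ℂ] ℂ) (hf : ∀ b : A, 0 ≤ b → 0 ≤ f b)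
    {b : A} (hb : IsSelfAdjoint b) : (starRingEnd ℂ) (f b) = f b := by
  have h1 := Complex.nonneg_iff.mp (hf _ (CFC.posPart_nonneg b))
  have h2 := Complex.nonneg_iff.mp (hf _ (CFC.negPart_nonneg b))
  have hb' : f b = f b⁺ - f b⁻ := by rw [← map_sub, CFC.posPart_sub_negPart b hb]
  rw [hb']
  apply Complex.ext <;> simp [← h1.2, ← h2.2]

lemma posfun_star (f : A →ₗ[ℂ] ℂ) (hf : ∀ b : A, 0 ≤ b → 0 ≤ f b) (b : A) :
    f (star b) = (starRingEnd ℂ) (f b) := by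
  have key : ∀ y : A, star y = (↑(ℜ y) : A) - Complex.I • (↑(ℑ y) : A) := by
    intro y
    nth_rewrite 1 [← realPart_add_I_smul_imaginaryPart y]
    rw [star_add, star_smul, (ℜ y).2.star_eq, (ℑ y).2.star_eq, Complex.star_def,
      Complex.conj_I, neg_smul, ← sub_eq_add_neg]
  have hb : f b = f ↑(ℜ b) + Complex.I * f ↑(ℑ b) := by
    conv_lhs => rw [← realPart_add_I_smul_imaginaryPart b]
    rw [map_add, map_smul, smul_eq_mul]
  rw [key b, map_sub, map_smul, smul_eq_mul, hb, map_add, map_mul,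
    posfun_real f hf (ℜ b).2, posfun_real f hf (ℑ b).2, Complex.conj_I]
  ring

lemma posfun_cs (f : A →ₗ[ℂ] ℂ) (hf : ∀ b : A, 0 ≤ b → 0 ≤ f b) (u v : A) :
    ‖f (star u * v)‖ ^ 2 ≤ (f (star u * u)).re * (f (star v * v)).re := by
  letI c : PreInnerProductSpace.Core ℂ A :=
    { inner := fun x y => f (star x * y)
      conj_inner_symm := fun x y => by
        change (starRingEnd ℂ) (f (star y * x)) = f (star x * y)
        rw [← posfun_star f hf, star_mul, star_star]
      re_inner_nonneg := fun x => (Complex.nonneg_iff.mp (hf _ (star_mul_self_nonneg x))).1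
      add_left := fun x y z => by simp [star_add, add_mul]
      smul_left := fun x y r => by
        simp [star_smul, smul_mul_assoc, smul_eq_mul] }
  have h := InnerProductSpace.Core.inner_mul_inner_self_le (𝕜 := ℂ) (F := A) u v
  have h' : ‖f (star u * v)‖ * ‖f (star v * u)‖
      ≤ (f (star u * u)).re * (f (star v * v)).re := h
  have hsym : ‖f (star v * u)‖ = ‖f (star u * v)‖ := by
    rw [show star v * u = star (star u * v) by rw [star_mul, star_star],
      posfun_star f hf, RCLike.norm_conj]
  rw [hsym] at h'
  simpa [sq] using h'

lemma posfun_mono (f : A →ₗ[ℂ] ℂ) (hf : ∀ b : A, 0 ≤ b → 0 ≤ f b)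
    {b c : A} (h : b ≤ c) : (f b).re ≤ (f c).re := by
  have := Complex.nonneg_iff.mp (hf _ (sub_nonneg.mpr h))
  rw [map_sub, Complex.sub_re] at this
  linarith [this.1]

lemma posfun_key (f : A →ₗ[ℂ] ℂ) (hf : ∀ b : A, 0 ≤ b → 0 ≤ f b) (hf1 : f 1 ≤ 1)
    (p : A) (hp_sa : p = star p) (hp_idem : p * p = p)
    (a : A) (ha0 : 0 ≤ a) (ha1 : a ≤ 1)
    (x : A) (hx : ‖x‖ ≤ 1) :
    ‖f (p * a * x * a * p)‖ ≤ Real.sqrt ((f ((p * a * p) ^ 2)).re) := by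
  have ha_sa : IsSelfAdjoint a := .of_nonneg ha0
  have hsap : star (a * p) = p * a := by rw [star_mul, ← hp_sa, ha_sa.star_eq]
  -- star x * x ≤ 1
  have hxx : star x * x ≤ 1 := by
    rw [← CStarAlgebra.norm_le_one_iff_of_nonneg _ (star_mul_self_nonneg x),
      CStarRing.norm_star_mul_self]
    nlinarith [norm_nonneg x]
  -- t := f (p * a * (a * p)), nonneg
  set t : ℝ := (f (p * a * (a * p))).re with ht
  have ht0 : 0 ≤ t := by
    have := (Complex.nonneg_iff.mp (hf _ (star_mul_self_nonneg (a * p)))).1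
    rwa [hsap] at this
  -- Cauchy-Schwarz step
  have hcs := posfun_cs f hf (a * p) (x * (a * p))
  rw [hsap] at hcs
  have e1 : p * a * (x * (a * p)) = p * a * x * a * p := by
    simp [mul_assoc]
  have e2 : star (x * (a * p)) * (x * (a * p)) = p * a * (star x * x) * (a * p) := by
    rw [star_mul, hsap]; simp [mul_assoc]
  rw [e1, e2] at hcs
  have hconj : p * a * (star x * x) * (a * p) ≤ p * a * (a * p) := by
    have := star_left_conjugate_le_conjugate hxx (a * p)
    rw [hsap] at this
    calc p * a * (star x * x) * (a * p) = p * a * (star x * x) * (a * p) := rfl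
    _ ≤ p * a * 1 * (a * p) := this
    _ = p * a * (a * p) := by rw [mul_one]
  have hcs2 : ‖f (p * a * x * a * p)‖ ^ 2 ≤ t * t := by
    refine hcs.trans ?_
    have := posfun_mono f hf hconj
    have h2 : (f (p * a * (star x * x) * (a * p))).re ≤ t := this
    have h2' : 0 ≤ (f (p * a * (star x * x) * (a * p))).re := by
      have : (0:A) ≤ p * a * (star x * x) * (a * p) := by
        have := star_mul_self_nonneg (x * (a * p))
        rwa [e2] at this
      exact (Complex.nonneg_iff.mp (hf _ this)).1
    nlinarith
  have habs : ‖f (p * a * x * a * p)‖ ≤ t := by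
    nlinarith [norm_nonneg (f (p * a * x * a * p))]
  -- t ≤ s := f (p * a * p)
  have haa : a * a ≤ a := by
    have := CStarAlgebra.pow_antitone ha0 ha1 (by norm_num : (1:ℕ) ≤ 2)
    simpa [sq, pow_one] using this
  have hts : t ≤ (f (p * a * p)).re := by
    refine posfun_mono f hf ?_
    have := star_left_conjugate_le_conjugate haa p
    rw [← hp_sa] at this
    calc p * a * (a * p) = p * (a * a) * p := by simp [mul_assoc]
    _ ≤ p * a * p := this
  -- s ≤ sqrt (f ((pap)^2))
  have hpap_sa : star (p * a * p) = p * a * p := by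
    rw [star_mul, star_mul, ← hp_sa, ha_sa.star_eq, mul_assoc]
  have hcs3 := posfun_cs f hf (p * a * p) 1
  rw [hpap_sa, mul_one, star_one, one_mul] at hcs3
  have hf1re : (f 1).re ≤ 1 := by
    have := Complex.le_def.mp hf1
    simpa using this.1
  have hsq0 : 0 ≤ (f ((p * a * p) ^ 2)).re := by
    have : (0:A) ≤ (p * a * p) ^ 2 := by
      have := star_mul_self_nonneg (p * a * p)
      rwa [hpap_sa, ← sq] at this
    exact (Complex.nonneg_iff.mp (hf _ this)).1
  have hssq : (f (p * a * p)).re ^ 2 ≤ (f ((p * a * p) ^ 2)).re := by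
    have h1 : (f (p * a * p)).re ≤ ‖f (p * a * p)‖ := Complex.re_le_norm _
    have h2 : ‖f (p * a * p)‖ ^ 2 ≤ (f (p * a * p * (p * a * p))).re * (f 1).re := hcs3
    rw [← sq] at h2
    have habs0 : (0:ℝ) ≤ ‖f (p * a * p)‖ := norm_nonneg _
    nlinarith
  have hs_sqrt : (f (p * a * p)).re ≤ Real.sqrt ((f ((p * a * p) ^ 2)).re) := by
    rcases le_or_gt (f (p * a * p)).re 0 with h | h
    · exact h.trans (Real.sqrt_nonneg _)
    · rw [show (f (p*a*p)).re = Real.sqrt ((f (p*a*p)).re ^ 2) by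
        rw [Real.sqrt_sq h.le]]
      exact Real.sqrt_le_sqrt hssq
  exact habs.trans (hts.trans hs_sqrt)

end aux

/-- Let `φ₁, φ₂, φ₃, φ₄` be positive linear functionals with `φ_j(1) ≤ 1` on a unital
C*-algebra, `φ := φ₁ − φ₂ + i(φ₃ − φ₄)`, `ψ := φ₁ + φ₂ + φ₃ + φ₄`, `p` a projection and
`0 ≤ a ≤ 1`.  Then `|φ(p a x a p)| ≤ 4·(ψ((p a p)²))^{1/2}` for every `x` with `‖x‖ ≤ 1`. -/
theorem stmt12 {A : Type*} [CStarAlgebra A] [PartialOrder A] [StarOrderedRing A]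
    (φ₁ φ₂ φ₃ φ₄ : A →ₗ[ℂ] ℂ)
    (h₁ : ∀ b : A, 0 ≤ b → 0 ≤ φ₁ b) (h₂ : ∀ b : A, 0 ≤ b → 0 ≤ φ₂ b)
    (h₃ : ∀ b : A, 0 ≤ b → 0 ≤ φ₃ b) (h₄ : ∀ b : A, 0 ≤ b → 0 ≤ φ₄ b)
    (h₁1 : φ₁ 1 ≤ 1) (h₂1 : φ₂ 1 ≤ 1) (h₃1 : φ₃ 1 ≤ 1) (h₄1 : φ₄ 1 ≤ 1)
    (p : A) (hp_sa : p = star p) (hp_idem : p * p = p)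
    (a : A) (ha0 : 0 ≤ a) (ha1 : a ≤ 1) :
    ∀ x : A, ‖x‖ ≤ 1 →
      ‖φ₁ (p * a * x * a * p) - φ₂ (p * a * x * a * p)
          + Complex.I * (φ₃ (p * a * x * a * p) - φ₄ (p * a * x * a * p))‖
        ≤ 4 * ((φ₁ ((p * a * p) ^ 2) + φ₂ ((p * a * p) ^ 2) + φ₃ ((p * a * p) ^ 2)
            + φ₄ ((p * a * p) ^ 2)).re) ^ ((1 : ℝ) / 2) := by
  intro x hx
  set c := p * a * x * a * p with hc
  set b := (p * a * p) ^ 2 with hb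
  -- positivity of b and of each (φⱼ b).re
  have ha_sa : IsSelfAdjoint a := .of_nonneg ha0
  have hpap_sa : star (p * a * p) = p * a * p := by
    rw [star_mul, star_mul, ← hp_sa, ha_sa.star_eq, mul_assoc]
  have hb0 : (0 : A) ≤ b := by
    have := star_mul_self_nonneg (p * a * p)
    rwa [hpap_sa, ← sq] at this
  have r1 : 0 ≤ (φ₁ b).re := (Complex.nonneg_iff.mp (h₁ _ hb0)).1
  have r2 : 0 ≤ (φ₂ b).re := (Complex.nonneg_iff.mp (h₂ _ hb0)).1
  have r3 : 0 ≤ (φ₃ b).re := (Complex.nonneg_iff.mp (h₃ _ hb0)).1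
  have r4 : 0 ≤ (φ₄ b).re := (Complex.nonneg_iff.mp (h₄ _ hb0)).1
  set S : ℝ := (φ₁ b + φ₂ b + φ₃ b + φ₄ b).re with hS
  have hSsum : S = (φ₁ b).re + (φ₂ b).re + (φ₃ b).re + (φ₄ b).re := by
    simp [hS, Complex.add_re]
  have hS0 : 0 ≤ S := by rw [hSsum]; linarith
  -- key bounds
  have k1 := posfun_key φ₁ h₁ h₁1 p hp_sa hp_idem a ha0 ha1 x hx
  have k2 := posfun_key φ₂ h₂ h₂1 p hp_sa hp_idem a ha0 ha1 x hx
  have k3 := posfun_key φ₃ h₃ h₃1 p hp_sa hp_idem a ha0 ha1 x hx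
  have k4 := posfun_key φ₄ h₄ h₄1 p hp_sa hp_idem a ha0 ha1 x hx
  have m1 : Real.sqrt ((φ₁ b).re) ≤ Real.sqrt S := Real.sqrt_le_sqrt (by rw [hSsum]; linarith)
  have m2 : Real.sqrt ((φ₂ b).re) ≤ Real.sqrt S := Real.sqrt_le_sqrt (by rw [hSsum]; linarith)
  have m3 : Real.sqrt ((φ₃ b).re) ≤ Real.sqrt S := Real.sqrt_le_sqrt (by rw [hSsum]; linarith)
  have m4 : Real.sqrt ((φ₄ b).re) ≤ Real.sqrt S := Real.sqrt_le_sqrt (by rw [hSsum]; linarith)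
  -- triangle inequality
  have tri : ‖φ₁ c - φ₂ c + Complex.I * (φ₃ c - φ₄ c)‖
      ≤ ‖φ₁ c‖ + ‖φ₂ c‖ + (‖φ₃ c‖ + ‖φ₄ c‖) := by
    calc ‖φ₁ c - φ₂ c + Complex.I * (φ₃ c - φ₄ c)‖
        ≤ ‖φ₁ c - φ₂ c‖ + ‖Complex.I * (φ₃ c - φ₄ c)‖ := norm_add_le _ _
      _ ≤ (‖φ₁ c‖ + ‖φ₂ c‖) + (‖φ₃ c‖ + ‖φ₄ c‖) := by
          rw [norm_mul, Complex.norm_I, one_mul]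
          gcongr <;> exact norm_sub_le _ _
      _ = ‖φ₁ c‖ + ‖φ₂ c‖ + (‖φ₃ c‖ + ‖φ₄ c‖) := rfl
  have hrpow : (S : ℝ) ^ ((1 : ℝ) / 2) = Real.sqrt S := (Real.sqrt_eq_rpow S).symm
  calc ‖φ₁ c - φ₂ c + Complex.I * (φ₃ c - φ₄ c)‖
      ≤ ‖φ₁ c‖ + ‖φ₂ c‖ + (‖φ₃ c‖ + ‖φ₄ c‖) := tri
    _ ≤ Real.sqrt S + Real.sqrt S + (Real.sqrt S + Real.sqrt S) := by
        gcongr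
        exacts [k1.trans m1, k2.trans m2, k3.trans m3, k4.trans m4]
    _ = 4 * Real.sqrt S := by ring
    _ = 4 * S ^ ((1 : ℝ) / 2) := by rw [hrpow]
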